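/- arXiv:2001.01712 — 4 statements merged into one kernel-verified Lean document; each statement's English description precedes it below -/
import Mathlib

section
/- Let A be an admissible matrix field on ℝⁿ with an invariant measure r, and let (v^{kl}, ā_{kl}) be a corrector pair for A for some fixed k,l ∈ {1,…,n}. Then ā_{kl} = ∫_{[0,1]ⁿ} a_{kl}(y) r(y) dy. -/
open MeasureTheory

/-- The unit cube `[0,1]^n` in `ℝ^n`. -/
def unitCube (n : ℕ) : Set (Fin n → ℝ) := Set.Icc 0 1

/-- Partial derivative `∂_{y_i} f`. -/
noncomputable def pd {n : ℕ} (f : (Fin n → ℝ) → ℝ) (i : Fin n) : (Fin n → ℝ) → ℝ :=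
  fun y => fderiv ℝ f y (Pi.single i 1)

/-- Second partial derivative `∂_{y_i} ∂_{y_j} f`. -/
noncomputable def pd2 {n : ℕ} (f : (Fin n → ℝ) → ℝ) (i j : Fin n) : (Fin n → ℝ) → ℝ :=
  pd (pd f j) i

/-- Third partial derivative `∂_{y_i} ∂_{y_j} ∂_{y_k} f`. -/
noncomputable def pd3 {n : ℕ} (f : (Fin n → ℝ) → ℝ) (i j k : Fin n) : (Fin n → ℝ) → ℝ :=
  pd (pd (pd f k) j) i

/-- `ℤ^n`-periodicity. -/
def ZPeriodic {n : ℕ} (f : (Fin n → ℝ) → ℝ) : Prop :=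
  ∀ (y : Fin n → ℝ) (z : Fin n → ℤ), f (y + fun i => (z i : ℝ)) = f y

/-- Admissible matrix field: C², periodic, symmetric, uniformly elliptic. -/
def IsAdmissible {n : ℕ} (a : Fin n → Fin n → (Fin n → ℝ) → ℝ) : Prop :=
  (∀ i j, ContDiff ℝ 2 (a i j)) ∧
  (∀ i j, ZPeriodic (a i j)) ∧
  (∀ i j y, a i j y = a j i y) ∧
  ∃ lam Lam : ℝ, 0 < lam ∧ lam ≤ Lam ∧
    ∀ (y ξ : Fin n → ℝ),
      lam * (∑ i, ξ i ^ 2) ≤ ∑ i, ∑ j, a i j y * ξ i * ξ j ∧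
      ∑ i, ∑ j, a i j y * ξ i * ξ j ≤ Lam * (∑ i, ξ i ^ 2)

/-- Corrector pair `(v^{kl}, ā_{kl})`. -/
def IsCorrector {n : ℕ} (a : Fin n → Fin n → (Fin n → ℝ) → ℝ)
    (k l : Fin n) (v : (Fin n → ℝ) → ℝ) (abar : ℝ) : Prop :=
  ContDiff ℝ 2 v ∧ ZPeriodic v ∧
  ∀ y, -(∑ i, ∑ j, a i j y * pd2 v i j y) - a k l y = -abar

/-- Invariant measure for the matrix field `a`. -/
def IsInvariantMeasure {n : ℕ} (a : Fin n → Fin n → (Fin n → ℝ) → ℝ)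
    (r : (Fin n → ℝ) → ℝ) : Prop :=
  ContDiff ℝ 2 r ∧ ZPeriodic r ∧ (∀ y, 0 < r y) ∧
  (∀ y, ∑ i, ∑ j, pd2 (fun x => a i j x * r x) i j y = 0) ∧
  ∫ y in unitCube n, r y = 1

/-- `u` is Cᵐ on a neighborhood of the closure of `U`, with all partial
derivatives up to order `m` bounded there. -/
def SmoothBounded {n : ℕ} (m : ℕ) (U : Set (Fin n → ℝ)) (u : (Fin n → ℝ) → ℝ) : Prop :=
  ∃ V : Set (Fin n → ℝ), IsOpen V ∧ closure U ⊆ V ∧ ContDiffOn ℝ m u V ∧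
    ∀ k : ℕ, k ≤ m → ∃ M : ℝ, ∀ x ∈ V, ‖iteratedFDerivWithin ℝ k u V x‖ ≤ M

lemma contDiff_pd {n m : ℕ} {f : (Fin n → ℝ) → ℝ} (hf : ContDiff ℝ ((m : ℕ∞) + 1) f)
    (i : Fin n) : ContDiff ℝ m (pd f i) :=
  (hf.fderiv_right le_rfl).clm_apply contDiff_const

lemma zper_pd {n : ℕ} {f : (Fin n → ℝ) → ℝ} (hf : Differentiable ℝ f)
    (hp : ZPeriodic f) (i : Fin n) : ZPeriodic (pd f i) := by
  intro y z
  set c : Fin n → ℝ := fun j => (z j : ℝ) with hc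
  have hT : HasFDerivAt (fun x : Fin n → ℝ => x + c) (ContinuousLinearMap.id ℝ _) y :=
    (hasFDerivAt_id y).add_const c
  have h2 : HasFDerivAt (fun x => f (x + c)) ((fderiv ℝ f (y + c)).comp
      (ContinuousLinearMap.id ℝ _)) y := (hf (y + c)).hasFDerivAt.comp y hT
  have h3 : (fun x => f (x + c)) = f := funext fun x => hp x z
  rw [h3, ContinuousLinearMap.comp_id] at h2
  show pd f i (y + c) = pd f i y
  unfold pd
  rw [h2.fderiv]

lemma pd_mul {n : ℕ} {f g : (Fin n → ℝ) → ℝ} {x : Fin n → ℝ} (hf : DifferentiableAt ℝ f x)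
    (hg : DifferentiableAt ℝ g x) (i : Fin n) :
    pd (fun y => f y * g y) i x = pd f i x * g x + f x * pd g i x := by
  unfold pd
  rw [fderiv_fun_mul hf hg]
  simp only [ContinuousLinearMap.add_apply, ContinuousLinearMap.smul_apply, smul_eq_mul]
  ring

lemma pd_sum {n : ℕ} {ι : Type*} {s : Finset ι} {F : ι → (Fin n → ℝ) → ℝ} {x : Fin n → ℝ}
    (h : ∀ j ∈ s, DifferentiableAt ℝ (F j) x) (i : Fin n) :
    pd (fun y => ∑ j ∈ s, F j y) i x = ∑ j ∈ s, pd (F j) i x := by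
  unfold pd
  rw [fderiv_fun_sum h]
  simp

lemma pd_sub {n : ℕ} {f g : (Fin n → ℝ) → ℝ} {x : Fin n → ℝ} (hf : DifferentiableAt ℝ f x)
    (hg : DifferentiableAt ℝ g x) (i : Fin n) :
    pd (fun y => f y - g y) i x = pd f i x - pd g i x := by
  unfold pd
  rw [fderiv_fun_sub hf hg]
  simp

lemma contDiff_pd_one {n : ℕ} {f : (Fin n → ℝ) → ℝ} (hf : ContDiff ℝ 2 f) (i : Fin n) :
    ContDiff ℝ 1 (pd f i) :=
  ((hf.fderiv_right (m := 1) (by norm_num)).clm_apply contDiff_const)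

lemma continuous_pd {n : ℕ} {f : (Fin n → ℝ) → ℝ} (hf : ContDiff ℝ 1 f) (i : Fin n) :
    Continuous (pd f i) :=
  ((hf.fderiv_right (m := 0) (by norm_num)).clm_apply contDiff_const).continuous

noncomputable def Gvec {n : ℕ} (b : Fin n → Fin n → (Fin n → ℝ) → ℝ)
    (v : (Fin n → ℝ) → ℝ) (i : Fin n) (y : Fin n → ℝ) : ℝ :=
  ∑ j, (b i j y * pd v j y - v y * pd (b i j) j y)

lemma integral_div_zero {n : ℕ} (hn : n ≠ 0) (b : Fin n → Fin n → (Fin n → ℝ) → ℝ)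
    (hb2 : ∀ i j, ContDiff ℝ 2 (b i j)) (hbper : ∀ i j, ZPeriodic (b i j))
    (hbsym : ∀ i j, b i j = b j i) (v : (Fin n → ℝ) → ℝ) (hv2 : ContDiff ℝ 2 v)
    (hvper : ZPeriodic v) (hinv : ∀ y, ∑ i, ∑ j, pd2 (b i j) i j y = 0) :
    ∫ y in unitCube n, ∑ i, ∑ j, b i j y * pd2 v i j y = 0 := by
  obtain ⟨m, rfl⟩ := Nat.exists_eq_succ_of_ne_zero hn
  have hv1 : ContDiff ℝ 1 v := hv2.of_le one_le_two
  have hF1 : ∀ i j, ContDiff ℝ 1 (fun y => b i j y * pd v j y - v y * pd (b i j) j y) :=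
    fun i j => (((hb2 i j).of_le one_le_two).mul (contDiff_pd_one hv2 j)).sub
      (hv1.mul (contDiff_pd_one (hb2 i j) j))
  have hG1 : ∀ i, ContDiff ℝ 1 (Gvec b v i) := fun i => ContDiff.sum fun j _ => hF1 i j
  have hGper : ∀ i, ZPeriodic (Gvec b v i) := by
    intro i y z
    unfold Gvec
    refine Finset.sum_congr rfl fun j _ => ?_
    rw [hbper i j y z, hvper y z,
      zper_pd (hv1.differentiable one_ne_zero) hvper j y z,
      zper_pd ((hb2 i j).differentiable two_ne_zero) (hbper i j) j y z]
  have hpt : ∀ x, ∑ i, pd (Gvec b v i) i x = ∑ i, ∑ j, b i j x * pd2 v i j x := by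
    intro x
    have hGpd : ∀ i, pd (Gvec b v i) i x =
        ∑ j, (pd (b i j) i x * pd v j x + b i j x * pd2 v i j x
          - (pd v i x * pd (b i j) j x + v x * pd2 (b i j) i j x)) := by
      intro i
      unfold Gvec
      rw [pd_sum (fun j _ => ((hF1 i j).differentiable one_ne_zero).differentiableAt) i]
      refine Finset.sum_congr rfl fun j _ => ?_
      rw [pd_sub ((((hb2 i j).of_le one_le_two).mul
            (contDiff_pd_one hv2 j)).differentiable one_ne_zero).differentiableAt
          ((hv1.mul (contDiff_pd_one (hb2 i j) j)).differentiable one_ne_zero).differentiableAt i,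
        pd_mul (((hb2 i j).differentiable two_ne_zero).differentiableAt)
          (((contDiff_pd_one hv2 j).differentiable one_ne_zero).differentiableAt) i,
        pd_mul ((hv1.differentiable one_ne_zero).differentiableAt)
          (((contDiff_pd_one (hb2 i j) j).differentiable one_ne_zero).differentiableAt) i]
      rfl
    rw [Finset.sum_congr rfl fun i _ => hGpd i]
    have h1 : ∑ i, ∑ j, pd (b i j) i x * pd v j x
        = ∑ i, ∑ j, pd v i x * pd (b i j) j x := by
      rw [Finset.sum_comm]
      refine Finset.sum_congr rfl fun i _ => Finset.sum_congr rfl fun j _ => ?_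
      rw [hbsym j i, mul_comm]
    have h2 : ∑ i, ∑ j, v x * pd2 (b i j) i j x = 0 := by
      simp_rw [← Finset.mul_sum]
      rw [hinv x, mul_zero]
    simp only [Finset.sum_sub_distrib, Finset.sum_add_distrib]
    linarith [h1, h2]
  have hle : (0 : Fin (m+1) → ℝ) ≤ 1 := fun i => zero_le_one
  have Hi : IntegrableOn (fun x => ∑ i, fderiv ℝ (Gvec b v i) x (Pi.single i 1))
      (Set.Icc (0 : Fin (m+1) → ℝ) 1) := by
    have hc : Continuous fun x => ∑ i, pd (Gvec b v i) i x :=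
      continuous_finset_sum _ fun i _ => continuous_pd (hG1 i) i
    exact hc.continuousOn.integrableOn_compact isCompact_Icc
  have hdivthm := integral_divergence_of_hasFDerivAt_off_countable'
    (0 : Fin (m+1) → ℝ) 1 hle (fun i => Gvec b v i)
    (fun i x => fderiv ℝ (Gvec b v i) x) ∅ Set.countable_empty
    (fun i => (hG1 i).continuous.continuousOn)
    (fun x _ i => (((hG1 i).differentiable one_ne_zero) x).hasFDerivAt) Hi
  have hshift : ∀ (i : Fin (m+1)) (x : Fin m → ℝ),
      Gvec b v i (i.insertNth ((1 : Fin (m+1) → ℝ) i) x)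
        = Gvec b v i (i.insertNth ((0 : Fin (m+1) → ℝ) i) x) := by
    intro i x
    have hx : i.insertNth ((1 : Fin (m+1) → ℝ) i) x
        = i.insertNth ((0 : Fin (m+1) → ℝ) i) x
          + fun j => ((Pi.single i 1 : Fin (m+1) → ℤ) j : ℝ) := by
      funext j
      rcases eq_or_ne j i with rfl | hne
      · simp
      · obtain ⟨j', rfl⟩ := Fin.exists_succAbove_eq (Ne.symm hne).symm
        simp [Fin.insertNth_apply_succAbove, Pi.single_eq_of_ne hne]
    rw [hx, hGper i _ (Pi.single i 1)]
  calc ∫ y in unitCube (m+1), ∑ i, ∑ j, b i j y * pd2 v i j y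
      = ∫ x in Set.Icc (0 : Fin (m+1) → ℝ) 1,
          ∑ i, fderiv ℝ (Gvec b v i) x (Pi.single i 1) := by
        rw [show (fun y => ∑ i, ∑ j, b i j y * pd2 v i j y)
            = fun x => ∑ i, fderiv ℝ (Gvec b v i) x (Pi.single i 1) from
          funext fun x => (hpt x).symm]
        rfl
    _ = ∑ i : Fin (m+1),
          ((∫ x in Set.Icc ((0 : Fin (m+1) → ℝ) ∘ i.succAbove) ((1 : Fin (m+1) → ℝ) ∘ i.succAbove),
              Gvec b v i (i.insertNth ((1 : Fin (m+1) → ℝ) i) x))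
            - ∫ x in Set.Icc ((0 : Fin (m+1) → ℝ) ∘ i.succAbove) ((1 : Fin (m+1) → ℝ) ∘ i.succAbove),
              Gvec b v i (i.insertNth ((0 : Fin (m+1) → ℝ) i) x)) := hdivthm
    _ = 0 := by
        refine Finset.sum_eq_zero fun i _ => sub_eq_zero.mpr ?_
        simp only [hshift]

/-- the effective coefficient is the average of `a_{kl}` against
the invariant measure: `ā_{kl} = ∫_{[0,1]ⁿ} a_{kl} r`. -/
theorem effective_coeff_eq_average {n : ℕ}
    (a : Fin n → Fin n → (Fin n → ℝ) → ℝ) (hA : IsAdmissible a)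
    (r : (Fin n → ℝ) → ℝ) (hr : IsInvariantMeasure a r)
    (k l : Fin n) (v : (Fin n → ℝ) → ℝ) (abar : ℝ)
    (hcorr : IsCorrector a k l v abar) :
    abar = ∫ y in unitCube n, a k l y * r y := by
  obtain ⟨hA2, hAper, hAsym, -⟩ := hA
  obtain ⟨hr2, hrper, hrpos, hinv, hrint⟩ := hr
  obtain ⟨hv2, hvper, hveq⟩ := hcorr
  have hn : n ≠ 0 := Nat.pos_iff_ne_zero.mp k.pos
  have hb2 : ∀ i j, ContDiff ℝ 2 (fun x => a i j x * r x) := fun i j => (hA2 i j).mul hr2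
  have hbper : ∀ i j, ZPeriodic (fun x => a i j x * r x) := by
    intro i j y z
    simp only
    rw [hAper i j y z, hrper y z]
  have hbsym : ∀ i j, (fun x => a i j x * r x) = (fun x => a j i x * r x) :=
    fun i j => funext fun y => by rw [hAsym i j y]
  have hkey := integral_div_zero hn (fun i j x => a i j x * r x) hb2 hbper hbsym v hv2 hvper hinv
  have hS : ∀ y, ∑ i, ∑ j, a i j y * r y * pd2 v i j y = abar * r y - a k l y * r y := by
    intro y
    have h := hveq y
    have hS' : ∑ i, ∑ j, a i j y * pd2 v i j y = abar - a k l y := by linarith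
    calc ∑ i, ∑ j, a i j y * r y * pd2 v i j y
        = (∑ i, ∑ j, a i j y * pd2 v i j y) * r y := by
          rw [Finset.sum_mul]
          exact Finset.sum_congr rfl fun i _ => by
            rw [Finset.sum_mul]
            exact Finset.sum_congr rfl fun j _ => by ring
      _ = abar * r y - a k l y * r y := by rw [hS']; ring
  rw [show (fun y => ∑ i, ∑ j, a i j y * r y * pd2 v i j y)
      = fun y => abar * r y - a k l y * r y from funext hS] at hkey
  have hint1 : IntegrableOn (fun y => a k l y * r y) (unitCube n) :=
    (((hA2 k l).continuous.mul hr2.continuous).continuousOn).integrableOn_compact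
      (isCompact_Icc : IsCompact (Set.Icc (0 : Fin n → ℝ) 1))
  have hint2 : IntegrableOn (fun y => abar * r y) (unitCube n) :=
    ((continuous_const.mul hr2.continuous).continuousOn).integrableOn_compact
      (isCompact_Icc : IsCompact (Set.Icc (0 : Fin n → ℝ) 1))
  rw [integral_sub hint2 hint1, integral_const_mul, hrint] at hkey
  linarith
end

section
/- Let a_{ij} : ℝⁿ → ℝ (1 ≤ i,j ≤ n) be C¹ and ℤⁿ-periodic, and let r : ℝⁿ → (0,∞) be C¹ and ℤⁿ-periodic. Assume that for every j ∈ {1,…,n}, Σ_{i=1}^n ∂_{y_i}(a_{ij}(y) r(y)) = 0 for all y ∈ ℝⁿ. Then for every C¹, ℤⁿ-periodic function v : ℝⁿ → ℝ and every j ∈ {1,…,n}, ∫_{[0,1]ⁿ} Σ_{i=1}^n a_{ij}(y) ∂_{y_i}v(y) r(y) dy = 0. (In particular, all the coefficients c^{kl}_j := ∫_{[0,1]ⁿ} a_{ij} ∂_{y_i}v^{kl} r dy built from correctors v^{kl} of A vanish.) -/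
open MeasureTheory

lemma aux_insertNth_one_eq {m : ℕ} (i : Fin (m+1)) (x : Fin m → ℝ) :
    i.insertNth ((1 : Fin (m+1) → ℝ) i) x
      = i.insertNth ((0 : Fin (m+1) → ℝ) i) x + fun k => ((Pi.single i 1 : Fin (m+1) → ℤ) k : ℝ) := by
  funext k
  rcases eq_or_ne k i with rfl | h
  · simp
  · obtain ⟨l, rfl⟩ := Fin.exists_succAbove_eq h
    simp [Pi.single_eq_of_ne (Fin.succAbove_ne i l)]

lemma aux_integral_sum_pd_eq_zero {m : ℕ} (F : Fin (m+1) → (Fin (m+1) → ℝ) → ℝ)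
    (hF : ∀ i, ContDiff ℝ 1 (F i)) (hper : ∀ i, ZPeriodic (F i)) :
    (∫ y in unitCube (m+1), ∑ i, pd (F i) i y) = 0 := by
  have hcont : ∀ i, Continuous (pd (F i) i) := by
    intro i
    exact (((hF i).continuous_fderiv one_ne_zero)).clm_apply continuous_const
  have key := MeasureTheory.integral_divergence_of_hasFDerivAt_off_countable
    (0 : Fin (m+1) → ℝ) 1 (fun _ => zero_le_one)
    (fun x i => F i x)
    (fun x => ContinuousLinearMap.pi fun i => fderiv ℝ (F i) x)
    ∅ Set.countable_empty
    (Continuous.continuousOn (continuous_pi fun i => (hF i).continuous))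
    (by
      intro x _
      refine hasFDerivAt_pi.2 fun i => ?_
      simpa using ((hF i).differentiable one_ne_zero x).hasFDerivAt)
    (by
      have : Continuous fun x => ∑ i, fderiv ℝ (F i) x (Pi.single i 1) :=
        continuous_finset_sum _ fun i _ => hcont i
      simpa using this.integrableOn_Icc)
  simp only [ContinuousLinearMap.pi_apply] at key
  rw [show unitCube (m+1) = Set.Icc (0 : Fin (m+1) → ℝ) 1 from rfl]
  rw [show (∫ y in Set.Icc (0 : Fin (m+1) → ℝ) 1, ∑ i, pd (F i) i y)
      = ∫ x in Set.Icc (0 : Fin (m+1) → ℝ) 1, ∑ i, fderiv ℝ (F i) x (Pi.single i 1) from rfl]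
  rw [key]
  refine Finset.sum_eq_zero fun i _ => ?_
  rw [sub_eq_zero]
  refine setIntegral_congr_fun measurableSet_Icc fun x _ => ?_
  rw [aux_insertNth_one_eq]
  exact hper i _ _

/-- if `∂_{y_i}(a_{ij} r) = 0` for every `j`, then
`∫ a_{ij} ∂_{y_i}v · r = 0` for every periodic `C¹` function `v` and every `j`. -/
theorem coeff_vanish_of_div_free {n : ℕ}
    (a : Fin n → Fin n → (Fin n → ℝ) → ℝ)
    (ha : ∀ i j, ContDiff ℝ 1 (a i j)) (haper : ∀ i j, ZPeriodic (a i j))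
    (r : (Fin n → ℝ) → ℝ) (hrC : ContDiff ℝ 1 r) (hrper : ZPeriodic r)
    (hrpos : ∀ y, 0 < r y)
    (hdiv : ∀ (j : Fin n) (y : Fin n → ℝ), (∑ i, pd (fun x => a i j x * r x) i y) = 0) :
    ∀ v : (Fin n → ℝ) → ℝ, ContDiff ℝ 1 v → ZPeriodic v →
      ∀ j : Fin n, (∫ y in unitCube n, (∑ i, a i j y * pd v i y) * r y) = 0 := by
  intro v hv hvper j
  cases n with
  | zero => simp
  | succ m =>
    set g : Fin (m+1) → (Fin (m+1) → ℝ) → ℝ := fun i x => a i j x * r x with hg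
    have hgC : ∀ i, ContDiff ℝ 1 (g i) := fun i => (ha i j).mul hrC
    set F : Fin (m+1) → (Fin (m+1) → ℝ) → ℝ := fun i x => g i x * v x with hFdef
    have hFC : ∀ i, ContDiff ℝ 1 (F i) := fun i => (hgC i).mul hv
    have hFper : ∀ i, ZPeriodic (F i) := by
      intro i y z
      simp only [hFdef, hg]
      rw [haper i j y z, hrper y z, hvper y z]
    have hpt : ∀ y, (∑ i, a i j y * pd v i y) * r y = ∑ i, pd (F i) i y := by
      intro y
      have hsum : ∀ i, pd (F i) i y = g i y * pd v i y + v y * pd (g i) i y := by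
        intro i
        have := fderiv_fun_mul (((hgC i).differentiable one_ne_zero) y) ((hv.differentiable one_ne_zero) y)
        simp only [pd, hFdef]
        rw [this]
        simp [mul_comm]
      rw [Finset.sum_congr rfl fun i _ => hsum i]
      rw [Finset.sum_add_distrib, ← Finset.mul_sum, hdiv j y, mul_zero, add_zero]
      rw [Finset.sum_mul]
      refine Finset.sum_congr rfl fun i _ => ?_
      simp only [hg]; ring
    calc (∫ y in unitCube (m+1), (∑ i, a i j y * pd v i y) * r y)
        = ∫ y in unitCube (m+1), ∑ i, pd (F i) i y := by
          refine setIntegral_congr_fun measurableSet_Icc fun y _ => hpt y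
      _ = 0 := aux_integral_sum_pd_eq_zero F hFC hFper
end

section
/- Let x₀ ∈ ℝⁿ, and let a_{ij} : ℝⁿ → ℝ (1 ≤ i,j ≤ n), r : ℝⁿ → ℝ, and v : ℝⁿ → ℝ be C¹, ℤⁿ-periodic functions, all even about x₀, i.e. F(x₀ + y) = F(x₀ − y) for all y ∈ ℝⁿ (for F equal to each a_{ij}, to r, and to v). Then for each j ∈ {1,…,n}, ∫_{[0,1]ⁿ} Σ_{i=1}^n a_{ij}(y) ∂_{y_i}v(y) r(y) dy = 0. -/
open MeasureTheory

section Aux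

variable {n : ℕ}

lemma fderiv_translate (f : (Fin n → ℝ) → ℝ) (hf : Differentiable ℝ f) (c y : Fin n → ℝ)
    (hfc : ∀ x, f (x + c) = f x) : fderiv ℝ f (y + c) = fderiv ℝ f y := by
  have h1 := (hf (y + c)).hasFDerivAt.comp y ((hasFDerivAt_id y).add_const c)
  have he : (f ∘ fun x : Fin n → ℝ => id x + c) = f := funext fun x => hfc x
  rw [he, ContinuousLinearMap.comp_id] at h1
  exact h1.fderiv.symm

lemma pd_reflect (f : (Fin n → ℝ) → ℝ) (hf : Differentiable ℝ f) (c : Fin n → ℝ)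
    (hsym : ∀ x, f x = f (c - x)) (i : Fin n) (x : Fin n → ℝ) :
    pd f i x = -(pd f i (c - x)) := by
  have h0 : HasFDerivAt (fun y : Fin n → ℝ => c - y)
      (-(ContinuousLinearMap.id ℝ (Fin n → ℝ))) x := (hasFDerivAt_id x).const_sub c
  have h1 := (hf (c - x)).hasFDerivAt.comp x h0
  have he : (f ∘ fun y : Fin n → ℝ => c - y) = f := funext fun y => (hsym y).symm
  rw [he] at h1
  have h2 := h1.fderiv
  simp only [pd, h2, ContinuousLinearMap.coe_comp', Function.comp_apply,
    ContinuousLinearMap.neg_apply, ContinuousLinearMap.coe_id', id_eq, map_neg]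

end Aux

/-- if `a_{ij}`, `r`, `v` are all even about a point `x₀`, then
`∫_{[0,1]ⁿ} a_{ij} ∂_{y_i}v · r = 0` for every `j`. -/
theorem coeff_vanish_of_even {n : ℕ} (x₀ : Fin n → ℝ)
    (a : Fin n → Fin n → (Fin n → ℝ) → ℝ)
    (ha : ∀ i j, ContDiff ℝ 1 (a i j)) (haper : ∀ i j, ZPeriodic (a i j))
    (haeven : ∀ i j (y : Fin n → ℝ), a i j (x₀ + y) = a i j (x₀ - y))
    (r : (Fin n → ℝ) → ℝ) (hrC : ContDiff ℝ 1 r) (hrper : ZPeriodic r)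
    (hreven : ∀ y : Fin n → ℝ, r (x₀ + y) = r (x₀ - y))
    (v : (Fin n → ℝ) → ℝ) (hvC : ContDiff ℝ 1 v) (hvper : ZPeriodic v)
    (hveven : ∀ y : Fin n → ℝ, v (x₀ + y) = v (x₀ - y)) :
    ∀ j : Fin n, (∫ y in unitCube n, (∑ i, a i j y * pd v i y) * r y) = 0 := by
  classical
  intro j
  have hvd : Differentiable ℝ v := hvC.differentiable one_ne_zero
  set c : Fin n → ℝ := x₀ + x₀ with hc
  set g : (Fin n → ℝ) → ℝ := fun y => (∑ i, a i j y * pd v i y) * r y with hgdef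
  -- symmetry about c in reflected form
  have hsymv : ∀ x, v x = v (c - x) := by
    intro x
    have h1 := hveven (x - x₀)
    have e1 : x₀ + (x - x₀) = x := by abel
    have e2 : x₀ - (x - x₀) = c - x := by rw [hc]; abel
    rw [e1, e2] at h1; exact h1
  have hsymr : ∀ x, r x = r (c - x) := by
    intro x
    have h1 := hreven (x - x₀)
    have e1 : x₀ + (x - x₀) = x := by abel
    have e2 : x₀ - (x - x₀) = c - x := by rw [hc]; abel
    rw [e1, e2] at h1; exact h1
  have hsyma : ∀ i x, a i j x = a i j (c - x) := by
    intro i x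
    have h1 := haeven i j (x - x₀)
    have e1 : x₀ + (x - x₀) = x := by abel
    have e2 : x₀ - (x - x₀) = c - x := by rw [hc]; abel
    rw [e1, e2] at h1; exact h1
  -- the integrand is odd about x₀
  have hodd : ∀ x, g x = -(g (c - x)) := by
    intro x
    have hv' : ∀ i, pd v i x = -(pd v i (c - x)) := fun i => pd_reflect v hvd c hsymv i x
    calc g x = (∑ i, a i j (c - x) * -(pd v i (c - x))) * r (c - x) := by
          rw [hgdef]
          simp only
          rw [hsymr x]
          congr 1
          exact Finset.sum_congr rfl fun i _ => by rw [hsyma i x, hv' i]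
      _ = -(g (c - x)) := by
          simp only [hgdef, mul_neg, Finset.sum_neg_distrib, neg_mul]
  -- the integrand is periodic
  have hgper : ZPeriodic g := by
    intro y z
    have hpdv : ∀ i, pd v i (y + fun k => ((z k : ℝ))) = pd v i y := by
      intro i
      unfold pd
      rw [fderiv_translate v hvd _ y (fun x => hvper x z)]
    show (∑ i, a i j (y + fun k => ((z k : ℝ))) * pd v i (y + fun k => ((z k : ℝ)))) *
        r (y + fun k => ((z k : ℝ))) = (∑ i, a i j y * pd v i y) * r y
    rw [hrper y z]
    congr 1
    exact Finset.sum_congr rfl fun i _ => by rw [haper i j y z, hpdv i]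
  -- continuity of the integrand
  have hgc : Continuous g := by
    have hpdc : ∀ i, Continuous (pd v i) := fun i =>
      (hvC.continuous_fderiv one_ne_zero).clm_apply continuous_const
    exact (continuous_finset_sum _ fun i _ =>
      ((ha i j).continuous.mul (hpdc i))).mul hrC.continuous
  -- fundamental domain setup
  set b : Module.Basis (Fin n) ℝ (Fin n → ℝ) := Pi.basisFun ℝ (Fin n) with hb
  set D : Set (Fin n → ℝ) := ZSpan.fundamentalDomain b with hD
  have hFD : IsAddFundamentalDomain (Submodule.span ℤ (Set.range ⇑b)) D volume :=
    ZSpan.isAddFundamentalDomain b volume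
  -- the unit cube agrees with D up to measure zero
  have hae : (unitCube n : Set (Fin n → ℝ)) =ᵐ[volume] D := by
    have hDeq : D = Set.pi Set.univ fun _ : Fin n => Set.Ico (0:ℝ) 1 := by
      rw [hD, hb]; exact ZSpan.fundamentalDomain_pi_basisFun
    have hCube : unitCube n = Set.pi Set.univ fun _ : Fin n => Set.Icc (0:ℝ) 1 := by
      show Set.Icc 0 1 = _
      exact (Set.pi_univ_Icc (0 : Fin n → ℝ) 1).symm
    rw [hDeq, hCube]
    have hsub : (Set.pi Set.univ fun _ : Fin n => Set.Ico (0:ℝ) 1) ⊆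
        Set.pi Set.univ fun _ : Fin n => Set.Icc (0:ℝ) 1 :=
      Set.pi_mono fun i _ => Set.Ico_subset_Icc_self
    have hm1 : volume (Set.pi Set.univ fun _ : Fin n => Set.Icc (0:ℝ) 1) = 1 := by
      simp [Set.pi_univ_Icc, Real.volume_Icc_pi]
    have hm2 : volume (Set.pi Set.univ fun _ : Fin n => Set.Ico (0:ℝ) 1) = 1 := by
      simp [volume_pi_pi]
    rw [MeasureTheory.ae_eq_set]
    constructor
    · rw [measure_diff hsub (MeasurableSet.univ_pi fun i =>
        measurableSet_Ico).nullMeasurableSet (by rw [hm2]; exact ENNReal.one_ne_top),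
        hm1, hm2, tsub_self]
    · rw [Set.diff_eq_empty.mpr hsub, measure_empty]
    -- instances for the lattice group
  haveI : DiscreteTopology (Submodule.span ℤ (Set.range ⇑b)) := by
    rw [hb]; exact ZSpan.discreteTopology_pi_basisFun
  haveI : IsZLattice ℝ (Submodule.span ℤ (Set.range ⇑b)) := instIsZLatticeRealSpan b
  haveI : MeasurableVAdd (Submodule.span ℤ (Set.range ⇑b)) (Fin n → ℝ) :=
    { measurable_const_vadd := fun γ => by
        have h : (fun x : Fin n → ℝ => γ +ᵥ x) = fun x => (γ : Fin n → ℝ) + x := rfl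
        rw [h]; exact measurable_id.const_add _
      measurable_vadd_const := fun x => by
        have h : (fun γ : Submodule.span ℤ (Set.range ⇑b) => γ +ᵥ x)
            = fun γ => γ.1 + x := rfl
        rw [h]; exact measurable_subtype_coe.add_const x }
  haveI : VAddInvariantMeasure (Submodule.span ℤ (Set.range ⇑b)) (Fin n → ℝ) volume :=
    ⟨fun γ s hs => by
      have h : (fun x : Fin n → ℝ => γ +ᵥ x) = fun x => (γ : Fin n → ℝ) + x := rfl
      rw [h]; exact measure_preimage_add volume _ s⟩
  -- invariance of g under the lattice
  have hinv : ∀ (γ : Submodule.span ℤ (Set.range ⇑b)) (x : Fin n → ℝ),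
      g (γ +ᵥ x) = g x := by
    intro γ x
    have hmemb : (γ : Fin n → ℝ) ∈ Submodule.span ℤ (Set.range ⇑(Pi.basisFun ℝ (Fin n))) := by
      rw [← hb]; exact γ.2
    have hmem := ((Pi.basisFun ℝ (Fin n)).mem_span_iff_repr_mem ℤ (γ : Fin n → ℝ)).mp hmemb
    choose z hz using hmem
    simp only [Pi.basisFun_repr, algebraMap_int_eq, eq_intCast] at hz
    have hvadd : (γ +ᵥ x) = x + fun i => ((z i : ℝ)) := by
      show γ.1 + x = _
      funext i
      show γ.1 i + x i = x i + (z i : ℝ)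
      rw [hz i]; ring
    rw [hvadd]
    exact hgper x z
  -- reflection machinery
  have hmp : MeasurePreserving (fun x : Fin n → ℝ => c - x) volume volume :=
    Measure.measurePreserving_sub_left volume c
  have hemb : MeasurableEmbedding (fun x : Fin n → ℝ => c - x) :=
    (MeasurableEquiv.subLeft c).measurableEmbedding
  have hFD' : IsAddFundamentalDomain (Submodule.span ℤ (Set.range ⇑b))
      ((fun x : Fin n → ℝ => c - x) '' D) volume := by
    have hmps : MeasurePreserving (⇑(Equiv.subLeft c).symm)
        (volume : Measure (Fin n → ℝ)) volume := by
      have h : MeasurePreserving ((fun y : Fin n → ℝ => y + c) ∘ fun x : Fin n → ℝ => -x)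
          volume volume :=
        (measurePreserving_add_right volume c).comp (Measure.measurePreserving_neg volume)
      exact h
    have := hFD.image_of_equiv (Equiv.subLeft c) hmps.quasiMeasurePreserving
      (Equiv.neg _) (by
        intro γ x
        show c - ((-γ : Submodule.span ℤ (Set.range ⇑b)) +ᵥ x) = γ +ᵥ (c - x)
        show c - ((-γ).1 + x) = γ.1 + (c - x)
        push_cast
        abel)
    exact this
  -- conclude
  have key : (∫ y in unitCube n, g y) = - ∫ y in unitCube n, g y := by
    calc ∫ y in unitCube n, g y = ∫ y in D, g y := setIntegral_congr_set hae
      _ = ∫ y in D, -(g (c - y)) :=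
          integral_congr_ae (Filter.Eventually.of_forall fun y => hodd y)
      _ = -∫ y in D, g (c - y) := integral_neg _
      _ = -∫ y in (fun x : Fin n → ℝ => c - x) '' D, g y := by
          rw [hmp.setIntegral_image_emb hemb g D]
      _ = -∫ y in D, g y := by rw [hFD'.setIntegral_eq hFD hinv]
      _ = -∫ y in unitCube n, g y := by rw [setIntegral_congr_set hae]
  have : (∫ y in unitCube n, g y) = 0 := by linarith
  exact this
end

section
/- Let α : ℝ² → (0,∞) be C² and ℤ²-periodic, and let r⁰ : ℝ² → (0,∞) be C³ and ℤ²-periodic with −∂²_{y₁} r⁰ − ∂²_{y₂}(α r⁰) = 0 on ℝ². Let s > 0 satisfy s·|∂³_{y₁} r⁰(y) + α(y) ∂_{y₁}∂²_{y₂} r⁰(y)| ≤ 1/2 for all y ∈ ℝ². Define v := s ∂_{y₁} r⁰, w := 1 + ∂²_{y₁} v + α ∂²_{y₂} v, a₁ := 1/w, a₂ := α a₁, and r := r⁰/a₁ = w r⁰. Then 1/2 ≤ w ≤ 3/2 on ℝ², and: (i) −a₁(y) ∂²_{y₁} v(y) − a₂(y) ∂²_{y₂} v(y) − a₁(y) =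 −1 for all y ∈ ℝ² (i.e. v solves the (1,1)-cell problem for A = diag(a₁, a₂) with effective constant ā₁₁ = 1); and (ii) ∂²_{y₁}(a₁(y) r(y)) + ∂²_{y₂}(a₂(y) r(y)) = 0 for all y ∈ ℝ² (i.e. r satisfies the invariant-measure equation for A = diag(a₁, a₂)). -/
open MeasureTheory

lemma pd_contDiff {n : ℕ} {f : (Fin n → ℝ) → ℝ} {m k : ℕ} (hf : ContDiff ℝ k f)
    (h : m + 1 ≤ k) (i : Fin n) : ContDiff ℝ m (pd f i) := by
  have : pd f i = fun y =>
      (ContinuousLinearMap.apply ℝ ℝ (Pi.single i 1 : Fin n → ℝ)) (fderiv ℝ f y) := rfl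
  rw [this]
  exact (ContinuousLinearMap.apply ℝ ℝ _).contDiff.comp
    (hf.fderiv_right (m := m) (by exact_mod_cast h))

lemma pd_const_mul {n : ℕ} {f : (Fin n → ℝ) → ℝ} {y : Fin n → ℝ}
    (hf : DifferentiableAt ℝ f y) (c : ℝ) (i : Fin n) :
    pd (fun x => c * f x) i y = c * pd f i y := by
  unfold pd; rw [fderiv_const_mul hf]; simp

lemma pd2_symm {n : ℕ} {f : (Fin n → ℝ) → ℝ} (hf : ContDiff ℝ 2 f)
    (i j : Fin n) (y : Fin n → ℝ) : pd2 f i j y = pd2 f j i y := by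
  have hd : DifferentiableAt ℝ (fderiv ℝ f) y :=
    (hf.fderiv_right (m := 1) (le_refl _)).differentiable (by norm_num) y
  have key : ∀ a b : Fin n, pd2 f a b y =
      fderiv ℝ (fderiv ℝ f) y (Pi.single a 1) (Pi.single b 1) := by
    intro a b
    have h1 := ((ContinuousLinearMap.apply ℝ ℝ (Pi.single b 1 : Fin n → ℝ)).hasFDerivAt.comp
      y hd.hasFDerivAt)
    have e1 : pd f b = (ContinuousLinearMap.apply ℝ ℝ (Pi.single b 1 : Fin n → ℝ)) ∘
        fderiv ℝ f := rfl
    show fderiv ℝ (pd f b) y (Pi.single a 1) = _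
    rw [e1, h1.fderiv]
    simp
  rw [key i j, key j i]
  exact (hf.contDiffAt.isSymmSndFDerivAt (by norm_num)) _ _

/-- explicit construction from the first proof of
Proposition 3.1: the perturbed diagonal matrix `A = diag(a₁, a₂)` has cell
solution `v = s ∂_{y₁} r⁰` (with `ā₁₁ = 1`) and invariant density `r = w r⁰`. -/

theorem explicit_construction
    (α : (Fin 2 → ℝ) → ℝ) (hαC : ContDiff ℝ 2 α) (hαper : ZPeriodic α)
    (hαpos : ∀ y, 0 < α y)
    (r0 : (Fin 2 → ℝ) → ℝ) (hr0C : ContDiff ℝ 3 r0) (hr0per : ZPeriodic r0)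
    (hr0pos : ∀ y, 0 < r0 y)
    (hr0pde : ∀ y, -(pd2 r0 0 0 y) - pd2 (fun x => α x * r0 x) 1 1 y = 0)
    (s : ℝ) (hs : 0 < s)
    (hsmall : ∀ y, s * |pd3 r0 0 0 0 y + α y * pd3 r0 0 1 1 y| ≤ 1 / 2)
    (v w a₁ a₂ r : (Fin 2 → ℝ) → ℝ)
    (hv : ∀ y, v y = s * pd r0 0 y)
    (hw : ∀ y, w y = 1 + pd2 v 0 0 y + α y * pd2 v 1 1 y)
    (ha₁ : ∀ y, a₁ y = (w y)⁻¹)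
    (ha₂ : ∀ y, a₂ y = α y * a₁ y)
    (hrdef : ∀ y, r y = w y * r0 y) :
    (∀ y, 1 / 2 ≤ w y ∧ w y ≤ 3 / 2) ∧
    (∀ y, -(a₁ y * pd2 v 0 0 y) - a₂ y * pd2 v 1 1 y - a₁ y = -1) ∧
    (∀ y, pd2 (fun x => a₁ x * r x) 0 0 y + pd2 (fun x => a₂ x * r x) 1 1 y = 0) := by
  have hr0C2 : ContDiff ℝ 2 r0 := hr0C.of_le (by norm_num)
  have hg : ContDiff ℝ 2 (pd r0 0) := pd_contDiff hr0C (by norm_num) 0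
  have hh : ContDiff ℝ 2 (pd r0 1) := pd_contDiff hr0C (by norm_num) 1
  have hv' : v = fun y => s * pd r0 0 y := funext hv
  have hpdv : ∀ i : Fin 2, pd v i = fun y => s * pd (pd r0 0) i y := by
    intro i
    funext y
    rw [hv']
    exact pd_const_mul (hg.differentiable (by norm_num) y) s i
  have hv00 : ∀ y, pd2 v 0 0 y = s * pd3 r0 0 0 0 y := by
    intro y
    show pd (pd v 0) 0 y = _
    rw [hpdv 0]
    exact pd_const_mul ((pd_contDiff hg (le_refl 2) 0).differentiable (by norm_num) y) s 0
  have e2 : pd (pd r0 0) 1 = pd (pd r0 1) 0 := funext fun y => pd2_symm hr0C2 1 0 y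
  have hv11 : ∀ y, pd2 v 1 1 y = s * pd3 r0 0 1 1 y := by
    intro y
    show pd (pd v 1) 1 y = _
    rw [hpdv 1]
    have h1 : pd (fun y => s * pd (pd r0 0) 1 y) 1 y = s * pd (pd (pd r0 0) 1) 1 y :=
      pd_const_mul ((pd_contDiff hg (le_refl 2) 1).differentiable (by norm_num) y) s 1
    rw [h1, e2]
    have h2 : pd (pd (pd r0 1) 0) 1 y = pd (pd (pd r0 1) 1) 0 y := pd2_symm hh 1 0 y
    rw [h2]
    rfl
  have hwval : ∀ y, w y = 1 + s * (pd3 r0 0 0 0 y + α y * pd3 r0 0 1 1 y) := by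
    intro y
    rw [hw y, hv00 y, hv11 y]
    ring
  have hwbound : ∀ y, 1 / 2 ≤ w y ∧ w y ≤ 3 / 2 := by
    intro y
    have h := hsmall y
    have habs : |s * (pd3 r0 0 0 0 y + α y * pd3 r0 0 1 1 y)| ≤ 1 / 2 := by
      rw [abs_mul, abs_of_pos hs]
      exact h
    rw [abs_le] at habs
    constructor <;> [linarith [hwval y, habs.1]; linarith [hwval y, habs.2]]
  have hwpos : ∀ y, 0 < w y := fun y => lt_of_lt_of_le (by norm_num) (hwbound y).1
  refine ⟨hwbound, ?_, ?_⟩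
  · intro y
    have hne : w y ≠ 0 := ne_of_gt (hwpos y)
    rw [ha₂ y, ha₁ y]
    have key : pd2 v 0 0 y + α y * pd2 v 1 1 y + 1 = w y := by linarith [hw y]
    calc -((w y)⁻¹ * pd2 v 0 0 y) - α y * (w y)⁻¹ * pd2 v 1 1 y - (w y)⁻¹
        = -((w y)⁻¹ * (pd2 v 0 0 y + α y * pd2 v 1 1 y + 1)) := by ring
      _ = -((w y)⁻¹ * w y) := by rw [key]
      _ = -1 := by rw [inv_mul_cancel₀ hne]
  · intro y
    have h1 : (fun x => a₁ x * r x) = r0 := by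
      funext x
      rw [ha₁ x, hrdef x]
      field_simp [ne_of_gt (hwpos x)]
    have h2 : (fun x => a₂ x * r x) = fun x => α x * r0 x := by
      funext x
      rw [ha₂ x, ha₁ x, hrdef x]
      field_simp [ne_of_gt (hwpos x)]
    rw [h1, h2]
    linarith [hr0pde y]
end
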